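/- Let A be a unital associative ℝ-algebra with involution star and let L : A → ℝ be an ℝ-linear functional such that L((star a)·a) ≥ 0 for all a ∈ A and L(star a) = L(a) for all a ∈ A. Then there exist a real inner product space V, a ∗-representation π of A on V, and a vector v ∈ V such that L(a) = ⟪π(a)v, v⟫ for every a ∈ A. -/

import Mathlib

section GNS
variable {A : Type} [Ring A] [Algebra ℝ A] [StarRing A] [StarModule ℝ A]

/-- The bilinear form `B a b = L (star a * b)`. -/
noncomputable def gnsB (L : A →ₗ[ℝ] ℝ) : A →ₗ[ℝ] A →ₗ[ℝ] ℝ :=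
  LinearMap.mk₂ ℝ (fun a b => L (star a * b))
    (fun a a' b => by show L (star (a + a') * b) = _; rw [star_add, add_mul, map_add])
    (fun r a b => by
      show L (star (r • a) * b) = _
      rw [star_smul, star_trivial, smul_mul_assoc, map_smul])
    (fun a b b' => by show L (star a * (b + b')) = _; rw [mul_add, map_add])
    (fun r a b => by show L (star a * (r • b)) = _; rw [mul_smul_comm, map_smul])

lemma gnsB_apply (L : A →ₗ[ℝ] ℝ) (a b : A) : gnsB L a b = L (star a * b) := rfl

lemma gnsB_symm (L : A →ₗ[ℝ] ℝ) (hsym : ∀ a : A, L (star a) = L a) (a b : A) :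
    gnsB L a b = gnsB L b a := by
  have := hsym (star a * b)
  simp only [star_mul, star_star] at this
  simpa [gnsB_apply] using this.symm

lemma gnsB_cs (L : A →ₗ[ℝ] ℝ) (hpos : ∀ a : A, 0 ≤ L (star a * a))
    (hsym : ∀ a : A, L (star a) = L a) (a b : A) :
    (gnsB L a b) ^ 2 ≤ gnsB L a a * gnsB L b b := by
  have key : ∀ t : ℝ, 0 ≤ (gnsB L b b) * (t * t) + (2 * gnsB L a b) * t + gnsB L a a := by
    intro t
    have h0 := hpos (a + t • b)
    have heq : L (star (a + t • b) * (a + t • b)) = gnsB L (a + t • b) (a + t • b) := rfl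
    rw [heq] at h0
    simp only [map_add, map_smul, LinearMap.add_apply, LinearMap.smul_apply,
      smul_eq_mul] at h0
    have hba : gnsB L b a = gnsB L a b := gnsB_symm L hsym b a
    rw [hba] at h0
    nlinarith [h0]
  have hd := discrim_le_zero key
  rw [discrim] at hd
  nlinarith [hd]

end GNS

section GNS2
variable {A : Type} [Ring A] [Algebra ℝ A] [StarRing A] [StarModule ℝ A]
variable (L : A →ₗ[ℝ] ℝ)

/-- The null space `N = {x | ∀ b, B b x = 0}`. -/
noncomputable def gnsN : Submodule ℝ A := LinearMap.ker (gnsB L).flip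

lemma mem_gnsN {x : A} : x ∈ gnsN L ↔ ∀ b : A, gnsB L b x = 0 := by
  constructor
  · intro h b
    have := congrFun (congrArg (fun f => f.toFun) (LinearMap.mem_ker.mp h)) b
    simpa using this
  · intro h
    exact LinearMap.mem_ker.mpr (LinearMap.ext fun b => h b)

lemma gnsN_mul_mem (a : A) {x : A} (hx : x ∈ gnsN L) : a * x ∈ gnsN L := by
  rw [mem_gnsN] at hx ⊢
  intro b
  have : gnsB L b (a * x) = gnsB L (star a * b) x := by
    simp only [gnsB_apply, star_mul, star_star, mul_assoc]
  rw [this, hx]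

/-- second-argument lift -/
noncomputable def gnsC : A →ₗ[ℝ] ((A ⧸ gnsN L) →ₗ[ℝ] ℝ) where
  toFun a := (gnsN L).liftQ (gnsB L a) (fun x hx => (mem_gnsN L).mp hx a)
  map_add' a a' := by
    apply Submodule.linearMap_qext
    ext x
    simp [map_add, Submodule.liftQ_apply]
    rfl
  map_smul' r a := by
    apply Submodule.linearMap_qext
    ext x
    simp [Submodule.liftQ_apply]
    exact Or.inl rfl

/-- The inner product on the quotient. -/
noncomputable def gnsD (hsym : ∀ a : A, L (star a) = L a) :
    (A ⧸ gnsN L) →ₗ[ℝ] (A ⧸ gnsN L) →ₗ[ℝ] ℝ :=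
  (gnsN L).liftQ (gnsC L) (by
    intro x hx
    apply Submodule.linearMap_qext
    ext b
    have : gnsB L x b = 0 := by rw [gnsB_symm L hsym]; exact (mem_gnsN L).mp hx b
    exact this)

lemma gnsD_mk (hsym : ∀ a : A, L (star a) = L a) (a b : A) :
    gnsD L hsym (Submodule.Quotient.mk a) (Submodule.Quotient.mk b) = gnsB L a b := rfl

end GNS2

section GNS3
variable {A : Type} [Ring A] [Algebra ℝ A] [StarRing A] [StarModule ℝ A]
variable (L : A →ₗ[ℝ] ℝ)

noncomputable def gnsCore (hpos : ∀ a : A, 0 ≤ L (star a * a))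
    (hsym : ∀ a : A, L (star a) = L a) :
    InnerProductSpace.Core ℝ (A ⧸ gnsN L) where
  inner x y := gnsD L hsym x y
  conj_inner_symm x y := by
    induction x using Submodule.Quotient.induction_on with | _ a =>
    induction y using Submodule.Quotient.induction_on with | _ b =>
    simp only [gnsD_mk, starRingEnd_apply, star_trivial]
    exact gnsB_symm L hsym b a
  re_inner_nonneg x := by
    induction x using Submodule.Quotient.induction_on with | _ a =>
    simpa [gnsD_mk, gnsB_apply] using hpos a
  add_left x y z := by simp [map_add]
  smul_left x y r := by simp
  definite x hx := by
    induction x using Submodule.Quotient.induction_on with | _ a =>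
    have hx' : gnsB L a a = 0 := hx
    rw [Submodule.Quotient.mk_eq_zero, mem_gnsN]
    intro b
    have h := gnsB_cs L hpos hsym b a
    rw [hx', mul_zero] at h
    nlinarith [sq_nonneg (gnsB L b a), h]

/-- left multiplication descends to the quotient -/
noncomputable def gnsPi : A →ₐ[ℝ] Module.End ℝ (A ⧸ gnsN L) where
  toFun a := Submodule.mapQ (gnsN L) (gnsN L) (LinearMap.mulLeft ℝ a)
    (fun x hx => gnsN_mul_mem L a hx)
  map_one' := by
    apply LinearMap.ext
    intro x
    induction x using Submodule.Quotient.induction_on with | _ u =>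
    simp [Submodule.mapQ_apply]
  map_mul' a b := by
    apply LinearMap.ext
    intro x
    induction x using Submodule.Quotient.induction_on with | _ u =>
    simp [Submodule.mapQ_apply, Module.End.mul_apply, mul_assoc]
    rfl
  map_zero' := by
    apply LinearMap.ext
    intro x
    induction x using Submodule.Quotient.induction_on with | _ u =>
    simp [Submodule.mapQ_apply]
  map_add' a b := by
    apply LinearMap.ext
    intro x
    induction x using Submodule.Quotient.induction_on with | _ u =>
    show (Submodule.Quotient.mk ((a + b) * u) : A ⧸ gnsN L) =
      Submodule.Quotient.mk (a * u) + Submodule.Quotient.mk (b * u)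
    simp [Submodule.mapQ_apply, add_mul, LinearMap.add_apply]
  commutes' r := by
    apply LinearMap.ext
    intro x
    induction x using Submodule.Quotient.induction_on with | _ u =>
    simp [Submodule.mapQ_apply, Algebra.algebraMap_eq_smul_one, LinearMap.smul_apply,
      smul_mul_assoc]

lemma gnsPi_mk (a u : A) :
    gnsPi L a (Submodule.Quotient.mk u) = Submodule.Quotient.mk (a * u) := rfl

end GNS3

open RealInnerProductSpace

/-- **GNS construction.** Every positive symmetric ℝ-linear functional `L`
on a unital ℝ-algebra with involution `A` is of the form `L(a) = ⟪π(a)v, v⟫` for some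
∗-representation `π` of `A` on a real inner product space `V` and a vector `v ∈ V`. -/
theorem statement8 (A : Type) [Ring A] [Algebra ℝ A] [StarRing A] [StarModule ℝ A]
    (L : A →ₗ[ℝ] ℝ)
    (hpos : ∀ a : A, 0 ≤ L (star a * a))
    (hsym : ∀ a : A, L (star a) = L a) :
    ∃ (V : Type) (_ : NormedAddCommGroup V) (_ : InnerProductSpace ℝ V)
      (π : A →ₐ[ℝ] Module.End ℝ V) (v : V),
      (∀ (a : A) (u w : V), ⟪π a u, w⟫ = ⟪u, π (star a) w⟫) ∧
      (∀ a : A, L a = ⟪π a v, v⟫) := by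
  letI core : InnerProductSpace.Core ℝ (A ⧸ gnsN L) := gnsCore L hpos hsym
  letI : NormedAddCommGroup (A ⧸ gnsN L) := core.toNormedAddCommGroup
  letI : InnerProductSpace ℝ (A ⧸ gnsN L) := InnerProductSpace.ofCore core.toCore
  refine ⟨A ⧸ gnsN L, _, _, gnsPi L, Submodule.Quotient.mk 1, ?_, ?_⟩
  · intro a u w
    induction u using Submodule.Quotient.induction_on with | _ x =>
    induction w using Submodule.Quotient.induction_on with | _ y =>
    show gnsD L hsym _ _ = gnsD L hsym _ _
    rw [gnsPi_mk, gnsPi_mk, gnsD_mk, gnsD_mk, gnsB_apply, gnsB_apply, star_mul, mul_assoc]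
  · intro a
    show L a = gnsD L hsym _ _
    rw [gnsPi_mk, gnsD_mk, gnsB_apply, mul_one, star_mul, star_one, one_mul, hsym]
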